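/- For α ≥ 0 and b > 0, the function α ↦ 1 + sinh(√(α/2)·b)·log(tanh(√(α/2)·b/2)) takes values in [0,1], tends to 1 as α → 0⁺, and tends to 0 as α → ∞. -/

import Mathlib

open Real Filter

private lemma aux_tanh_half (x : ℝ) :
    Real.tanh (x / 2) = Real.sinh x / (Real.cosh x + 1) := by
  have hc : (0:ℝ) < Real.cosh (x / 2) := Real.cosh_pos _
  have hp := Real.cosh_sq_sub_sinh_sq (x / 2)
  have h2 : Real.sinh x = 2 * Real.sinh (x / 2) * Real.cosh (x / 2) := by
    rw [← Real.sinh_two_mul]; ring_nf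
  have h3 : Real.cosh x = Real.cosh (x / 2) ^ 2 + Real.sinh (x / 2) ^ 2 := by
    rw [← Real.cosh_two_mul]; ring_nf
  have hc1 : Real.cosh (x / 2) ^ 2 + Real.sinh (x / 2) ^ 2 + 1 ≠ 0 := by nlinarith
  rw [Real.tanh_eq_sinh_div_cosh, h2, h3]
  field_simp
  linear_combination (-Real.sinh (x / 2)) * hp

private lemma aux_log_tanh_half {x : ℝ} (hx : 0 < x) :
    Real.log (Real.tanh (x / 2)) = - Real.arsinh (1 / Real.sinh x) := by
  have hs : 0 < Real.sinh x := Real.sinh_pos_iff.2 hx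
  have hc : 0 < Real.cosh x + 1 := by nlinarith [Real.cosh_pos x]
  have ht : Real.tanh (x / 2) = Real.sinh x / (Real.cosh x + 1) := aux_tanh_half x
  have htpos : 0 < Real.tanh (x / 2) := by rw [ht]; positivity
  have hkey : Real.sinh (- Real.log (Real.tanh (x / 2))) = 1 / Real.sinh x := by
    rw [Real.sinh_eq, Real.exp_neg, neg_neg, Real.exp_log htpos, ht]
    have hp := Real.cosh_sq_sub_sinh_sq x
    field_simp
    nlinarith
  have h := congrArg Real.arsinh hkey
  rw [Real.arsinh_sinh] at h
  linarith

private lemma aux_sinh_le_mul_cosh {y : ℝ} (hy : 0 ≤ y) :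
    Real.sinh y ≤ y * Real.cosh y := by
  have hd : ∀ z : ℝ, HasDerivAt (fun w => w * Real.cosh w - Real.sinh w)
      (z * Real.sinh z) z := by
    intro z
    have h := ((hasDerivAt_id z).mul (Real.hasDerivAt_cosh z)).sub (Real.hasDerivAt_sinh z)
    refine h.congr_deriv ?_
    simp only [id_eq, one_mul]
    ring
  have mono : MonotoneOn (fun w => w * Real.cosh w - Real.sinh w) (Set.Ici 0) := by
    apply monotoneOn_of_deriv_nonneg (convex_Ici 0)
    · exact ((continuous_id.mul Real.continuous_cosh).sub Real.continuous_sinh).continuousOn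
    · intro z _
      exact (hd z).differentiableAt.differentiableWithinAt
    · intro z hz
      rw [interior_Ici] at hz
      rw [(hd z).deriv]
      exact mul_nonneg (le_of_lt hz) (by simpa using (le_of_lt hz))
  have h := mono (Set.mem_Ici.2 le_rfl) hy hy
  simp only [zero_mul, Real.sinh_zero, Real.cosh_zero, sub_zero, zero_sub, neg_zero] at h
  linarith

/-- bounds at a fixed `x > 0`, with `y = arsinh (1 / sinh x)`. -/
private lemma aux_bounds {x : ℝ} (hx : 0 < x) :
    Real.sinh x * Real.arsinh (1 / Real.sinh x) ≤ 1 ∧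
    1 / Real.cosh (Real.arsinh (1 / Real.sinh x)) ≤
      Real.sinh x * Real.arsinh (1 / Real.sinh x) := by
  have hs : 0 < Real.sinh x := Real.sinh_pos_iff.2 hx
  set y := Real.arsinh (1 / Real.sinh x) with hy
  have hsy : Real.sinh y = 1 / Real.sinh x := Real.sinh_arsinh _
  have hy0 : 0 ≤ y := Real.arsinh_nonneg_iff.2 (by positivity)
  constructor
  · have h1 : y ≤ Real.sinh y := Real.self_le_sinh_iff.2 hy0
    rw [hsy] at h1
    calc Real.sinh x * y ≤ Real.sinh x * (1 / Real.sinh x) :=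
          mul_le_mul_of_nonneg_left h1 hs.le
      _ = 1 := by field_simp
  · have h2 : Real.sinh y ≤ y * Real.cosh y := aux_sinh_le_mul_cosh hy0
    rw [hsy] at h2
    have hch : 0 < Real.cosh y := Real.cosh_pos y
    rw [div_le_iff₀ hch]
    have : 1 / Real.sinh x * Real.sinh x ≤ y * Real.cosh y * Real.sinh x :=
      mul_le_mul_of_nonneg_right h2 hs.le
    rw [one_div, inv_mul_cancel₀ hs.ne'] at this
    nlinarith

/-- The moment generating function
`α ↦ 1 + sinh(√(α/2) b) log(tanh(√(α/2) b/2))` of the reflection/synchronized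
coupling time takes values in `[0,1]`, tends to `1` as `α → 0⁺` and to `0` as
`α → ∞`. -/
theorem stmt_18 (b : ℝ) (hb : 0 < b) :
    letI f : ℝ → ℝ := fun α =>
      1 + Real.sinh (Real.sqrt (α / 2) * b) * Real.log (Real.tanh (Real.sqrt (α / 2) * b / 2))
    (∀ α, 0 ≤ α → f α ∈ Set.Icc (0 : ℝ) 1) ∧
    Filter.Tendsto f (nhdsWithin 0 (Set.Ioi 0)) (nhds 1) ∧
    Filter.Tendsto f Filter.atTop (nhds 0) := by
  set g : ℝ → ℝ := fun x => 1 + Real.sinh x * Real.log (Real.tanh (x / 2)) with hg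
  have hgx : ∀ x : ℝ, 0 < x →
      g x = 1 - Real.sinh x * Real.arsinh (1 / Real.sinh x) := by
    intro x hx
    simp only [hg, aux_log_tanh_half hx]
    ring
  -- membership
  have hmem : ∀ x : ℝ, 0 ≤ x → g x ∈ Set.Icc (0:ℝ) 1 := by
    intro x hx
    rcases eq_or_lt_of_le hx with rfl | hx
    · simp [hg]
    · have hs : 0 < Real.sinh x := Real.sinh_pos_iff.2 hx
      have hy0 : 0 ≤ Real.arsinh (1 / Real.sinh x) :=
        Real.arsinh_nonneg_iff.2 (by positivity)
      obtain ⟨h1, _⟩ := aux_bounds hx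
      rw [hgx x hx]
      constructor
      · linarith
      · nlinarith
  -- limit of g at 0⁺
  have hG1 : Filter.Tendsto g (nhdsWithin 0 (Set.Ioi 0)) (nhds 1) := by
    have heq : g =ᶠ[nhdsWithin (0:ℝ) (Set.Ioi 0)] fun x =>
        1 + ((fun t => t * Real.log t) (Real.sinh x)
          - Real.sinh x * Real.log (Real.cosh x + 1)) := by
      filter_upwards [self_mem_nhdsWithin] with x hx
      have hx : (0:ℝ) < x := hx
      have hs : 0 < Real.sinh x := Real.sinh_pos_iff.2 hx
      have hc : 0 < Real.cosh x + 1 := by nlinarith [Real.cosh_pos x]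
      simp only [hg, aux_tanh_half x, Real.log_div hs.ne' hc.ne']
      ring
    have hcont : Filter.Tendsto
        (fun x => 1 + ((fun t => t * Real.log t) (Real.sinh x)
          - Real.sinh x * Real.log (Real.cosh x + 1))) (nhds 0) (nhds 1) := by
      have h1 : ContinuousAt (fun x => (fun t => t * Real.log t) (Real.sinh x)) 0 :=
        Real.continuous_mul_log.continuousAt.comp Real.continuous_sinh.continuousAt
      have h2 : ContinuousAt (fun x => Real.sinh x * Real.log (Real.cosh x + 1)) 0 := by
        apply ContinuousAt.mul Real.continuous_sinh.continuousAt
        exact (Real.continuousAt_log (by norm_num)).comp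
          ((Real.continuous_cosh.add continuous_const).continuousAt)
      have hF : ContinuousAt (fun x : ℝ => 1 + ((fun t => t * Real.log t) (Real.sinh x)
          - Real.sinh x * Real.log (Real.cosh x + 1))) 0 := continuousAt_const.add (h1.sub h2)
      have hcont := hF.tendsto
      simp only [Real.sinh_zero, Real.cosh_zero, zero_mul, sub_zero, add_zero] at hcont
      exact hcont
    exact (hcont.mono_left nhdsWithin_le_nhds).congr' heq.symm
  -- limit of g at ∞
  have hsinh_top : Filter.Tendsto Real.sinh Filter.atTop Filter.atTop := by
    apply tendsto_atTop_mono' atTop _ tendsto_id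
    filter_upwards [eventually_ge_atTop (0:ℝ)] with x hx
    exact Real.self_le_sinh_iff.2 hx
  have hytop : Filter.Tendsto (fun x => Real.arsinh (1 / Real.sinh x))
      Filter.atTop (nhds 0) := by
    have h1 : Filter.Tendsto (fun x => 1 / Real.sinh x) Filter.atTop (nhds 0) := by
      have := hsinh_top.inv_tendsto_atTop
      simp only [one_div]
      exact this
    have := (Real.continuous_arsinh.tendsto 0).comp h1
    rw [Real.arsinh_zero] at this
    exact this
  have hG0 : Filter.Tendsto g Filter.atTop (nhds 0) := by
    have hub : Filter.Tendsto
        (fun x => 1 - 1 / Real.cosh (Real.arsinh (1 / Real.sinh x)))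
        Filter.atTop (nhds 0) := by
      have hc : Filter.Tendsto (fun x => Real.cosh (Real.arsinh (1 / Real.sinh x)))
          Filter.atTop (nhds 1) := by
        have hcc := (Real.continuous_cosh.tendsto 0).comp hytop
        rw [Real.cosh_zero] at hcc
        exact hcc
      have := (tendsto_const_nhds (x := (1:ℝ)) (f := Filter.atTop)).sub
        ((tendsto_const_nhds (x := (1:ℝ)) (f := Filter.atTop)).div hc one_ne_zero)
      simpa using this
    apply tendsto_of_tendsto_of_tendsto_of_le_of_le' tendsto_const_nhds hub
    · filter_upwards [eventually_gt_atTop (0:ℝ)] with x hx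
      exact (hmem x hx.le).1
    · filter_upwards [eventually_gt_atTop (0:ℝ)] with x hx
      obtain ⟨_, h2⟩ := aux_bounds hx
      rw [hgx x hx]
      linarith
  -- now compose with α ↦ √(α/2) * b
  have hxcont : Continuous (fun α : ℝ => Real.sqrt (α / 2) * b) :=
    (Real.continuous_sqrt.comp (continuous_id.div_const 2)).mul continuous_const
  refine ⟨?_, ?_, ?_⟩
  · intro α hα
    exact hmem _ (mul_nonneg (Real.sqrt_nonneg _) hb.le)
  · apply hG1.comp
    apply tendsto_nhdsWithin_of_tendsto_nhds_of_eventually_within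
    · have := hxcont.continuousAt (x := (0:ℝ))
      have h0 : Real.sqrt ((0:ℝ) / 2) * b = 0 := by simp
      rw [ContinuousAt, h0] at this
      exact this.mono_left nhdsWithin_le_nhds
    · filter_upwards [self_mem_nhdsWithin] with α (hα : (0:ℝ) < α)
      exact mul_pos (Real.sqrt_pos.2 (by linarith)) hb
  · apply hG0.comp
    apply tendsto_atTop_atTop_of_monotone
    · intro u v huv
      exact mul_le_mul_of_nonneg_right
        (Real.sqrt_le_sqrt (by linarith)) hb.le
    · intro K
      refine ⟨2 * (K / b) ^ 2, ?_⟩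
      have : Real.sqrt (2 * (K / b) ^ 2 / 2) = |K / b| := by
        rw [show 2 * (K / b) ^ 2 / 2 = (K / b) ^ 2 by ring, Real.sqrt_sq_eq_abs]
      rw [this]
      calc K = K / b * b := by field_simp
        _ ≤ |K / b| * b := mul_le_mul_of_nonneg_right (le_abs_self _) hb.le
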